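/- If X, X_1, X_2, ... are i.i.d. real random variables with E[X^2] < ∞, mean μ, and X is not a.s. equal to μ, then for every 0 < p ≤ 2 the series ∑_{n=1}^∞ E[|S_n/n - μ|^p] diverges, where S_n = X_1 + ... + X_n. -/

import Mathlib

open MeasureTheory ProbabilityTheory Filter

section SLpAux

noncomputable def trunc (M x : ℝ) : ℝ := if |x| ≤ M then x else 0

lemma trunc_meas (M : ℝ) : Measurable (trunc M) :=
  Measurable.ite (measurableSet_le measurable_abs measurable_const) measurable_id measurable_const

lemma trunc_abs_le (M x : ℝ) : |trunc M x| ≤ |x| := by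
  unfold trunc; split <;> simp [abs_nonneg]

lemma trunc_abs_le' {M : ℝ} (hM : 0 ≤ M) (x : ℝ) : |trunc M x| ≤ M := by
  unfold trunc; split <;> simpa

lemma trunc_sub_abs_le (M x : ℝ) : |x - trunc M x| ≤ |x| := by
  unfold trunc; split <;> simp [abs_nonneg]

lemma trunc_tendsto (x : ℝ) : Tendsto (fun k : ℕ => trunc k x) atTop (nhds x) := by
  apply Tendsto.congr' _ tendsto_const_nhds
  filter_upwards [eventually_ge_atTop ⌈|x|⌉₊] with k hk
  have : |x| ≤ (k : ℝ) := le_trans (Nat.le_ceil _) (by exact_mod_cast hk)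
  simp [trunc, this]

lemma sq_sub_le {a b x d : ℝ} (ha : |a| ≤ x) (hb : |b| ≤ d) : (a - b)^2 ≤ (x + d)^2 := by
  have h1 := abs_le.mp ha
  have h2 := abs_le.mp hb
  nlinarith [h1.1, h1.2, h2.1, h2.2]


lemma clamp_ineq {u c : ℝ} (hc : 0 < c) : u^2*c^2 - u^4 ≤ (u * max (-c) (min c u)) * c^2 := by
  rcases le_total u c with h | h
  · rcases le_total (-c) u with h' | h'
    · rw [min_eq_right h, max_eq_right h']
      nlinarith [sq_nonneg (u^2), sq_nonneg u, sq_nonneg c]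
    · rw [min_eq_right h, max_eq_left h']
      nlinarith [mul_pos hc hc, sq_nonneg (u + c), sq_nonneg (u*c + c^2), sq_nonneg u,
        mul_nonneg (mul_nonneg hc.le hc.le) hc.le, sq_nonneg (u^2 - c^2)]
  · rw [min_eq_left h, max_eq_right (by linarith : -c ≤ c)]
    nlinarith [mul_pos hc hc, sq_nonneg (u - c), sq_nonneg u, sq_nonneg (u^2 - c^2),
      mul_nonneg (mul_nonneg hc.le hc.le) hc.le]

lemma amgm_abs {x t : ℝ} (ht : 0 < t) : 2*t*|x| ≤ x^2 + t^2 := by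
  nlinarith [sq_nonneg (|x| - t), sq_abs x, abs_nonneg x]


variable {Ω : Type*} [MeasurableSpace Ω] {P : Measure Ω} [IsProbabilityMeasure P]

lemma integrable_of_bdd {f : Ω → ℝ} (hf : Measurable f) {C : ℝ} (h : ∀ ω, |f ω| ≤ C) :
    Integrable f P :=
  (integrable_const C).mono' hf.aestronglyMeasurable
    (Filter.Eventually.of_forall (by simpa [Real.norm_eq_abs] using h))

lemma sum_sq {W : ℕ → Ω → ℝ} (hm : ∀ i, Measurable (W i))
    (hindep : iIndepFun W P)
    (hL2 : ∀ i, MemLp (W i) 2 P)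
    (h0 : ∀ i, ∫ ω, W i ω ∂P = 0) {v : ℝ} (hv : ∀ i, ∫ ω, (W i ω)^2 ∂P = v) (n : ℕ) :
    ∫ ω, (∑ i ∈ Finset.range n, W i ω)^2 ∂P = n * v := by
  induction n with
  | zero => simp
  | succ n ih =>
    set S : Ω → ℝ := fun ω => ∑ i ∈ Finset.range n, W i ω with hS
    have hSm : Measurable S := by
      apply Finset.measurable_sum
      exact fun i _ => hm i
    have hSL2 : MemLp S 2 P := by
      have h := memLp_finset_sum' (Finset.range n) (fun i (_ : i ∈ Finset.range n) => hL2 i)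
      convert h using 1
      ext ω
      simp [hS]
    have hSW : IndepFun S (W n) P := by
      have := hindep.indepFun_finset_sum_of_notMem hm (Finset.notMem_range_self (n := n))
      convert this using 1
      ext ω
      simp [hS]
    have hiS2 : Integrable (fun ω => S ω ^ 2) P := hSL2.integrable_sq
    have hiW2 : Integrable (fun ω => W n ω ^ 2) P := (hL2 n).integrable_sq
    have hiSW : Integrable (fun ω => S ω * W n ω) P :=
      hSW.integrable_mul (hSL2.integrable one_le_two) ((hL2 n).integrable one_le_two)
    have hiS : Integrable S P := hSL2.integrable one_le_two
    have hS0 : ∫ ω, S ω ∂P = 0 := by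
      rw [hS, integral_finset_sum _ (fun i _ => (hL2 i).integrable one_le_two)]
      simp [h0]
    have hcross : ∫ ω, S ω * W n ω ∂P = 0 := by
      rw [hSW.integral_fun_mul_eq_mul_integral hSm.aestronglyMeasurable (hm n).aestronglyMeasurable, hS0, zero_mul]
    have key : ∀ ω, (∑ i ∈ Finset.range (n+1), W i ω)^2
        = S ω ^ 2 + (2 * (S ω * W n ω) + W n ω ^ 2) := by
      intro ω
      rw [Finset.sum_range_succ]
      ring
    have hadd : Integrable (fun a => 2 * (S a * W n a) + W n a ^ 2) P :=
      (hiSW.const_mul 2).add hiW2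
    rw [integral_congr_ae (Filter.Eventually.of_forall key),
      integral_add hiS2 hadd,
      integral_add (hiSW.const_mul 2) hiW2, integral_const_mul, hcross, ih, hv n]
    push_cast
    ring

lemma sum_four {W : ℕ → Ω → ℝ} (hm : ∀ i, Measurable (W i))
    (hindep : iIndepFun W P)
    {C : ℝ} (hC : 0 ≤ C) (hb : ∀ i ω, |W i ω| ≤ C)
    (h0 : ∀ i, ∫ ω, W i ω ∂P = 0) {α : ℝ} (hα : ∀ i, ∫ ω, (W i ω)^2 ∂P = α) (n : ℕ) :
    ∫ ω, (∑ i ∈ Finset.range n, W i ω)^4 ∂P ≤ 3*n^2*α^2 + n*C^2*α := by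
  have hα0 : 0 ≤ α := by
    rw [← hα 0]
    exact integral_nonneg (fun ω => by positivity)
  have hsqb : ∀ i ω, |(W i ω)^2| ≤ C^2 := by
    intro i ω
    rw [abs_of_nonneg (by positivity)]
    calc (W i ω)^2 = |W i ω|^2 := (sq_abs _).symm
    _ ≤ C^2 := by nlinarith [hb i ω, abs_nonneg (W i ω)]
  have hL2 : ∀ i, MemLp (W i) 2 P := fun i =>
    (memLp_two_iff_integrable_sq (hm i).aestronglyMeasurable).mpr
      (integrable_of_bdd ((hm i).pow_const 2) (hsqb i))
  induction n with
  | zero => simp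
  | succ n ih =>
    set S : Ω → ℝ := fun ω => ∑ i ∈ Finset.range n, W i ω with hS
    have hSm : Measurable S := Finset.measurable_sum _ (fun i _ => hm i)
    have hSb : ∀ ω, |S ω| ≤ n * C := by
      intro ω
      calc |S ω| ≤ ∑ i ∈ Finset.range n, |W i ω| := Finset.abs_sum_le_sum_abs _ _
      _ ≤ ∑ _i ∈ Finset.range n, C := Finset.sum_le_sum (fun i _ => hb i ω)
      _ = n * C := by simp [mul_comm]
    have hSW : IndepFun S (W n) P := by
      have := hindep.indepFun_finset_sum_of_notMem hm (Finset.notMem_range_self (n := n))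
      convert this using 1
      ext ω
      simp [hS]
    have hS0 : ∫ ω, S ω ∂P = 0 := by
      rw [hS, integral_finset_sum _ (fun i _ => (hL2 i).integrable one_le_two)]
      simp [h0]
    have hS2 : ∫ ω, S ω ^ 2 ∂P = n * α := sum_sq hm hindep hL2 h0 hα n
    -- cross terms
    have c1 : ∫ ω, S ω ^ 3 * W n ω ∂P = 0 := by
      have h := (hSW.comp (measurable_id.pow_const 3) measurable_id).integral_fun_mul_eq_mul_integral
        ((hSm.pow_const 3).aestronglyMeasurable) ((hm n).aestronglyMeasurable)
      simpa [h0 n] using h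
    have c2 : ∫ ω, S ω ^ 2 * W n ω ^ 2 ∂P = (n * α) * α := by
      have h := (hSW.comp (measurable_id.pow_const 2) (measurable_id.pow_const 2)).integral_fun_mul_eq_mul_integral
        ((hSm.pow_const 2).aestronglyMeasurable) (((hm n).pow_const 2).aestronglyMeasurable)
      simpa [Function.comp_def, hS2, hα n] using h
    have c3 : ∫ ω, S ω * W n ω ^ 3 ∂P = 0 := by
      have h := (hSW.comp measurable_id (measurable_id.pow_const 3)).integral_fun_mul_eq_mul_integral
        (hSm.aestronglyMeasurable) (((hm n).pow_const 3).aestronglyMeasurable)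
      simpa [hS0] using h
    have hW4 : ∫ ω, W n ω ^ 4 ∂P ≤ C^2 * α := by
      have hpt : ∀ ω, W n ω ^ 4 ≤ C^2 * W n ω ^ 2 := by
        intro ω
        have h2 := hsqb n ω
        rw [abs_of_nonneg (by positivity)] at h2
        nlinarith [sq_nonneg (W n ω)]
      calc ∫ ω, W n ω ^ 4 ∂P ≤ ∫ ω, C^2 * W n ω ^ 2 ∂P := by
            apply integral_mono (integrable_of_bdd ((hm n).pow_const 4)
              (fun ω => by rw [abs_of_nonneg (by positivity), show (4:ℕ) = 2*2 from rfl, pow_mul]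
                           exact pow_le_pow_left₀ (by positivity) ((abs_le.mp (hsqb n ω)).2) 2))
              ((integrable_of_bdd ((hm n).pow_const 2) (hsqb n)).const_mul _) hpt
      _ = C^2 * α := by rw [integral_const_mul, hα n]
    -- integrability of all terms
    have iS4 : Integrable (fun ω => S ω ^ 4) P :=
      integrable_of_bdd (hSm.pow_const 4) (fun ω => by
        rw [abs_of_nonneg (by positivity)]
        calc S ω ^4 = |S ω|^4 := by rw [← abs_pow, abs_of_nonneg (by positivity)]
        _ ≤ (n*C)^4 := pow_le_pow_left₀ (abs_nonneg _) (hSb ω) 4)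
    have iA : Integrable (fun ω => S ω ^ 3 * W n ω) P :=
      integrable_of_bdd ((hSm.pow_const 3).mul (hm n)) (fun ω => by
        rw [abs_mul, abs_pow]
        exact mul_le_mul (pow_le_pow_left₀ (abs_nonneg _) (hSb ω) 3) (hb n ω) (abs_nonneg _)
          (by positivity))
    have iB : Integrable (fun ω => S ω ^ 2 * W n ω ^ 2) P :=
      integrable_of_bdd ((hSm.pow_const 2).mul ((hm n).pow_const 2)) (fun ω => by
        rw [abs_mul, abs_pow, abs_pow]
        exact mul_le_mul (pow_le_pow_left₀ (abs_nonneg _) (hSb ω) 2)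
          (pow_le_pow_left₀ (abs_nonneg _) (hb n ω) 2) (by positivity) (by positivity))
    have iC : Integrable (fun ω => S ω * W n ω ^ 3) P :=
      integrable_of_bdd (hSm.mul ((hm n).pow_const 3)) (fun ω => by
        rw [abs_mul, abs_pow]
        exact mul_le_mul (hSb ω) (pow_le_pow_left₀ (abs_nonneg _) (hb n ω) 3) (by positivity)
          (by positivity))
    have iW4 : Integrable (fun ω => W n ω ^ 4) P :=
      integrable_of_bdd ((hm n).pow_const 4) (fun ω => by
        rw [abs_pow]
        exact pow_le_pow_left₀ (abs_nonneg _) (hb n ω) 4)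
    have key : ∀ ω, (∑ i ∈ Finset.range (n+1), W i ω)^4
        = S ω ^ 4 + (4 * (S ω ^3 * W n ω) + (6 * (S ω^2 * W n ω^2) +
          (4 * (S ω * W n ω ^3) + W n ω ^4))) := by
      intro ω
      rw [Finset.sum_range_succ]
      ring
    have i1 : Integrable (fun ω => 4 * (S ω * W n ω ^3) + W n ω ^4) P := (iC.const_mul 4).add iW4
    have i2 : Integrable (fun ω => 6 * (S ω^2 * W n ω^2) + (4 * (S ω * W n ω ^3) + W n ω ^4)) P :=
      (iB.const_mul 6).add i1
    have i3 : Integrable (fun ω => 4 * (S ω ^3 * W n ω) + (6 * (S ω^2 * W n ω^2) +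
        (4 * (S ω * W n ω ^3) + W n ω ^4))) P := (iA.const_mul 4).add i2
    rw [integral_congr_ae (Filter.Eventually.of_forall key), integral_add iS4 i3,
      integral_add (iA.const_mul 4) i2, integral_add (iB.const_mul 6) i1,
      integral_add (iC.const_mul 4) iW4, integral_const_mul, integral_const_mul,
      integral_const_mul, c1, c2, c3]
    push_cast
    nlinarith [sq_nonneg α, hW4, ih]

lemma trunc_exists {Z0 : Ω → ℝ} (hm0 : Measurable Z0) (hZ2 : MemLp Z0 2 P)
    (h0 : ∫ ω, Z0 ω ∂P = 0) {v : ℝ} (hv : ∫ ω, (Z0 ω)^2 ∂P = v) (hvpos : 0 < v) :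
    ∃ M : ℝ, 1 ≤ M ∧
      v/2 ≤ (∫ ω, (trunc M (Z0 ω) - ∫ ω', trunc M (Z0 ω') ∂P)^2 ∂P) ∧
      (∫ ω, (trunc M (Z0 ω) - ∫ ω', trunc M (Z0 ω') ∂P)^2 ∂P) ≤ v ∧
      (∫ ω, (Z0 ω - trunc M (Z0 ω) + ∫ ω', trunc M (Z0 ω') ∂P)^2 ∂P) ≤ v/1024 := by
  have hZ1 : Integrable Z0 P := hZ2.integrable one_le_two
  have hZsq : Integrable (fun ω => (Z0 ω)^2) P := hZ2.integrable_sq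
  set c : ℝ := ∫ ω, |Z0 ω| ∂P with hc
  have habs : Integrable (fun ω => |Z0 ω|) P := hZ1.abs
  have htrunc_int : ∀ M : ℝ, Integrable (fun ω => trunc M (Z0 ω)) P := fun M =>
    habs.mono' ((trunc_meas M).comp hm0).aestronglyMeasurable
      (Filter.Eventually.of_forall (fun ω => by
        simpa [Real.norm_eq_abs] using trunc_abs_le M (Z0 ω)))
  set m : ℝ → ℝ := fun M => ∫ ω, trunc M (Z0 ω) ∂P with hmdef
  have hm_bdd : ∀ M : ℝ, |m M| ≤ c := by
    intro M
    calc |m M| ≤ ∫ ω, |trunc M (Z0 ω)| ∂P := by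
          simpa [Real.norm_eq_abs] using
            norm_integral_le_integral_norm (μ := P) (f := fun ω => trunc M (Z0 ω))
    _ ≤ ∫ ω, |Z0 ω| ∂P := integral_mono (htrunc_int M).abs habs (fun ω => trunc_abs_le M (Z0 ω))
  have hm_tendsto : Tendsto (fun k : ℕ => m (k : ℝ)) atTop (nhds 0) := by
    rw [← h0]
    apply tendsto_integral_of_dominated_convergence (fun ω => |Z0 ω|)
      (fun k => ((trunc_meas _).comp hm0).aestronglyMeasurable) habs
    · exact fun k => Filter.Eventually.of_forall (fun ω => by
        simpa [Real.norm_eq_abs] using trunc_abs_le (k : ℝ) (Z0 ω))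
    · exact Filter.Eventually.of_forall (fun ω => trunc_tendsto (Z0 ω))
  have hbound_int : Integrable (fun ω => (|Z0 ω| + c)^2) P := by
    have h1 : MemLp (fun ω => |Z0 ω|) 2 P := by
      simpa [Real.norm_eq_abs] using hZ2.norm
    exact (h1.add (memLp_const c)).integrable_sq
  have halpha : Tendsto (fun k : ℕ => ∫ ω, (trunc (k:ℝ) (Z0 ω) - m (k:ℝ))^2 ∂P) atTop
      (nhds v) := by
    rw [← hv]
    have hvZ : (fun ω => (Z0 ω)^2) = fun ω => (Z0 ω - 0)^2 := by simp
    rw [hvZ]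
    apply tendsto_integral_of_dominated_convergence (fun ω => (|Z0 ω| + c)^2)
      (fun k => ((((trunc_meas _).comp hm0).sub_const _).pow_const 2).aestronglyMeasurable)
      hbound_int
    · intro k
      apply Filter.Eventually.of_forall (fun ω => ?_)
      rw [Real.norm_eq_abs, abs_of_nonneg (by positivity)]
      exact sq_sub_le (trunc_abs_le _ _) (hm_bdd _)
    · apply Filter.Eventually.of_forall (fun ω => ?_)
      exact ((trunc_tendsto (Z0 ω)).sub hm_tendsto).pow 2
  have hbeta : Tendsto (fun k : ℕ => ∫ ω, (Z0 ω - trunc (k:ℝ) (Z0 ω) + m (k:ℝ))^2 ∂P) atTop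
      (nhds 0) := by
    have h00 : (0:ℝ) = ∫ ω, ((0:ℝ) + (0:ℝ))^2 ∂P := by simp
    have hmeasβ : ∀ k : ℕ, AEStronglyMeasurable
        (fun ω => (Z0 ω - trunc (k:ℝ) (Z0 ω) + m (k:ℝ))^2) P := fun k =>
      (((hm0.sub ((trunc_meas _).comp hm0)).add_const _).pow_const 2).aestronglyMeasurable
    rw [h00]
    apply tendsto_integral_of_dominated_convergence (fun ω => (|Z0 ω| + c)^2)
      (hmeasβ)
      hbound_int
    · intro k
      apply Filter.Eventually.of_forall (fun ω => ?_)
      rw [Real.norm_eq_abs, abs_of_nonneg (by positivity)]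
      have : Z0 ω - trunc (k:ℝ) (Z0 ω) + m (k:ℝ) = (Z0 ω - trunc (k:ℝ) (Z0 ω)) - (- m (k:ℝ)) := by
        ring
      rw [this]
      exact sq_sub_le (trunc_sub_abs_le _ _) (by simpa using hm_bdd (k:ℝ))
    · apply Filter.Eventually.of_forall (fun ω => ?_)
      have h1 : Tendsto (fun k : ℕ => Z0 ω - trunc (k:ℝ) (Z0 ω)) atTop (nhds 0) := by
        have := tendsto_const_nhds (x := Z0 ω) (f := atTop (α := ℕ)) |>.sub (trunc_tendsto (Z0 ω))
        simpa using this
      exact (h1.add hm_tendsto).pow 2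
  have hle : ∀ M : ℝ, 0 ≤ M → (∫ ω, (trunc M (Z0 ω) - m M)^2 ∂P) ≤ v := by
    intro M hM
    have hf_int := htrunc_int M
    have hfsq_int : Integrable (fun ω => trunc M (Z0 ω)^2) P :=
      integrable_of_bdd (((trunc_meas M).comp hm0).pow_const 2) (C := M^2) (fun ω => by
        rw [abs_of_nonneg (by positivity), ← sq_abs]
        exact pow_le_pow_left₀ (abs_nonneg _) (trunc_abs_le' hM _) 2)
    have hexp : ∀ ω, (trunc M (Z0 ω) - m M)^2
        = trunc M (Z0 ω)^2 + ((-2 * m M) * trunc M (Z0 ω) + m M ^2) := by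
      intro ω; ring
    have ha1 : Integrable (fun a => -2 * m M * trunc M (Z0 a) + m M ^ 2) P :=
      (hf_int.const_mul _).add (integrable_const _)
    rw [integral_congr_ae (Filter.Eventually.of_forall hexp),
      integral_add hfsq_int ha1,
      integral_add (hf_int.const_mul _) (integrable_const _), integral_const_mul,
      integral_const]
    have h1 : ∫ ω, trunc M (Z0 ω)^2 ∂P ≤ v := by
      rw [← hv]
      apply integral_mono hfsq_int hZsq
      intro ω
      show trunc M (Z0 ω)^2 ≤ Z0 ω ^ 2
      rw [← sq_abs (trunc M (Z0 ω)), ← sq_abs (Z0 ω)]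
      exact pow_le_pow_left₀ (abs_nonneg _) (trunc_abs_le _ _) 2
    simp only [probReal_univ, measure_univ, ENNReal.toReal_one, smul_eq_mul, one_mul]
    nlinarith [sq_nonneg (m M)]
  have hev1 : ∀ᶠ k : ℕ in atTop, v/2 ≤ ∫ ω, (trunc (k:ℝ) (Z0 ω) - m (k:ℝ))^2 ∂P :=
    halpha.eventually (eventually_ge_nhds (by linarith))
  have hev2 : ∀ᶠ k : ℕ in atTop, (∫ ω, (Z0 ω - trunc (k:ℝ) (Z0 ω) + m (k:ℝ))^2 ∂P) ≤ v/1024 :=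
    hbeta.eventually (eventually_le_nhds (by positivity))
  obtain ⟨k, ⟨h1, h2⟩, h3⟩ := ((hev1.and hev2).and (eventually_ge_atTop 1)).exists
  exact ⟨(k:ℝ), by exact_mod_cast h3, h1, hle _ (by positivity), h2⟩

set_option maxHeartbeats 1000000 in
lemma anticonc {Z : ℕ → Ω → ℝ} {Z0 : Ω → ℝ} (hm : ∀ i, Measurable (Z i)) (hm0 : Measurable Z0)
    (hindep : iIndepFun Z P)
    (hid : ∀ i, IdentDistrib (Z i) Z0 P P)
    (hZ2 : MemLp Z0 2 P) (h0 : ∫ ω, Z0 ω ∂P = 0)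
    {v : ℝ} (hv : ∫ ω, (Z0 ω)^2 ∂P = v) (hvpos : 0 < v) :
    ∃ N : ℕ, 1 ≤ N ∧ ∀ n, N ≤ n →
      1/4096 ≤ (P {ω | Real.sqrt v / 64 * Real.sqrt n ≤ |∑ i ∈ Finset.range n, Z i ω|}).toReal := by
  obtain ⟨M, hM1, ha1, ha2, hb1⟩ := trunc_exists hm0 hZ2 h0 hv hvpos
  have hM0 : (0:ℝ) ≤ M := by linarith
  set m : ℝ := ∫ ω', trunc M (Z0 ω') ∂P with hmdef
  set g : ℝ → ℝ := fun x => trunc M x - m with hgdef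
  set hfun : ℝ → ℝ := fun x => x - trunc M x + m with hhdef
  have hg : Measurable g := (trunc_meas M).sub_const m
  have hh : Measurable hfun := (measurable_id.sub (trunc_meas M)).add_const m
  set α : ℝ := ∫ ω, (g (Z0 ω))^2 ∂P with hαdef
  set β : ℝ := ∫ ω, (hfun (Z0 ω))^2 ∂P with hβdef
  have hα1 : v/2 ≤ α := ha1
  have hα2 : α ≤ v := ha2
  have hβ1 : β ≤ v/1024 := hb1
  have hβ0 : 0 ≤ β := integral_nonneg (fun ω => by positivity)
  -- the truncated and residual parts
  set A : ℕ → Ω → ℝ := fun i ω => g (Z i ω) with hAdef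
  set B : ℕ → Ω → ℝ := fun i ω => hfun (Z i ω) with hBdef
  have hmA : ∀ i, Measurable (A i) := fun i => hg.comp (hm i)
  have hmB : ∀ i, Measurable (B i) := fun i => hh.comp (hm i)
  have hindepA : iIndepFun A P := hindep.comp (fun _ => g) (fun _ => hg)
  have hindepB : iIndepFun B P := hindep.comp (fun _ => hfun) (fun _ => hh)
  have hZAB : ∀ i ω, Z i ω = A i ω + B i ω := by
    intro i ω
    simp only [hAdef, hBdef, hgdef, hhdef]
    ring
  -- bound on m and A
  have htrunc_int : Integrable (fun ω => trunc M (Z0 ω)) P :=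
    integrable_of_bdd ((trunc_meas M).comp hm0) (fun ω => trunc_abs_le' hM0 _)
  have hm_bdd : |m| ≤ M := by
    rw [hmdef]
    calc |∫ ω', trunc M (Z0 ω') ∂P| ≤ ∫ ω', |trunc M (Z0 ω')| ∂P := by
          simpa [Real.norm_eq_abs] using
            norm_integral_le_integral_norm (μ := P) (f := fun ω => trunc M (Z0 ω))
    _ ≤ ∫ _ω', M ∂P := integral_mono htrunc_int.abs (integrable_const M)
          (fun ω => trunc_abs_le' hM0 _)
    _ = M := by simp
  set C : ℝ := 2*M with hCdef
  have hC0 : 0 ≤ C := by linarith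
  have habsA : ∀ i ω, |A i ω| ≤ C := by
    intro i ω
    calc |A i ω| ≤ |trunc M (Z i ω)| + |m| := abs_sub _ _
    _ ≤ M + M := add_le_add (trunc_abs_le' hM0 _) hm_bdd
    _ = C := by rw [hCdef]; ring
  -- moment transfers
  have hZL2 : ∀ i, MemLp (Z i) 2 P := fun i => (hid i).symm.memLp_snd hZ2
  have hZ1int : ∀ i, Integrable (Z i) P := fun i => (hZL2 i).integrable one_le_two
  have hZ01 : Integrable Z0 P := hZ2.integrable one_le_two
  have intZ1 : ∀ i, ∫ ω, Z i ω ∂P = 0 := fun i => by rw [(hid i).integral_eq]; exact h0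
  have intZ2 : ∀ i, ∫ ω, (Z i ω)^2 ∂P = v := fun i => by
    rw [← hv]
    exact ((hid i).comp (measurable_id.pow_const 2)).integral_eq
  have intgZ0 : ∫ ω, g (Z0 ω) ∂P = 0 := by
    simp only [hgdef]
    rw [integral_sub htrunc_int (integrable_const m), integral_const]
    simp [hmdef]
  have inthZ0 : ∫ ω, hfun (Z0 ω) ∂P = 0 := by
    simp only [hhdef]
    have h1 : Integrable (fun ω => Z0 ω - trunc M (Z0 ω)) P := hZ01.sub htrunc_int
    rw [integral_add h1 (integrable_const m), integral_sub hZ01 htrunc_int, integral_const, h0]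
    simp [hmdef]
  have intA1 : ∀ i, ∫ ω, A i ω ∂P = 0 := fun i =>
    (((hid i).comp hg).integral_eq).trans intgZ0
  have intB1 : ∀ i, ∫ ω, B i ω ∂P = 0 := fun i =>
    (((hid i).comp hh).integral_eq).trans inthZ0
  have intA2 : ∀ i, ∫ ω, (A i ω)^2 ∂P = α := fun i =>
    ((hid i).comp (hg.pow_const 2)).integral_eq
  have intB2 : ∀ i, ∫ ω, (B i ω)^2 ∂P = β := fun i =>
    ((hid i).comp (hh.pow_const 2)).integral_eq
  have hα0 : 0 ≤ α := by linarith
  have hAL2 : ∀ i, MemLp (A i) 2 P := fun i =>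
    (memLp_two_iff_integrable_sq (hmA i).aestronglyMeasurable).mpr
      (integrable_of_bdd ((hmA i).pow_const 2) (C := C^2) (fun ω => by
        rw [abs_of_nonneg (by positivity), ← sq_abs]
        exact pow_le_pow_left₀ (abs_nonneg _) (habsA i ω) 2))
  have hBL2 : ∀ i, MemLp (B i) 2 P := fun i => by
    have heq : B i = fun ω => Z i ω - A i ω := by
      funext ω
      simp only [hAdef, hBdef, hgdef, hhdef]
      ring
    rw [heq]
    exact (hZL2 i).sub (hAL2 i)
  -- choose N
  obtain ⟨N₀, hN₀⟩ := exists_nat_ge (C^2/v)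
  refine ⟨max N₀ 1, le_max_right _ _, fun n hn => ?_⟩
  have hn1 : 1 ≤ n := le_trans (le_max_right _ _) hn
  have hnR : (1:ℝ) ≤ (n:ℝ) := by exact_mod_cast hn1
  have hC2n : C^2 ≤ n * v := by
    have h1 : (N₀ : ℝ) ≤ n := by exact_mod_cast le_trans (le_max_left _ _) hn
    have := (div_le_iff₀ hvpos).mp (le_trans hN₀ h1)
    linarith
  -- notation
  set w : ℝ := Real.sqrt v with hwdef
  have hw0 : 0 < w := Real.sqrt_pos.mpr hvpos
  have hw2 : w^2 = v := Real.sq_sqrt hvpos.le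
  set s : ℝ := Real.sqrt n with hsdef
  have hs0 : 0 < s := Real.sqrt_pos.mpr (by linarith)
  have hs2 : s^2 = (n:ℝ) := Real.sq_sqrt (by linarith)
  set cst : ℝ := 4*w*s with hcstdef
  have hcst0 : 0 < cst := by positivity
  set U : Ω → ℝ := fun ω => ∑ i ∈ Finset.range n, A i ω with hUdef
  set V : Ω → ℝ := fun ω => ∑ i ∈ Finset.range n, B i ω with hVdef
  set T : Ω → ℝ := fun ω => ∑ i ∈ Finset.range n, Z i ω with hTdef
  have hUm : Measurable U := Finset.measurable_sum _ (fun i _ => hmA i)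
  have hVm : Measurable V := Finset.measurable_sum _ (fun i _ => hmB i)
  have hTm : Measurable T := Finset.measurable_sum _ (fun i _ => hm i)
  have hTUV : ∀ ω, T ω = U ω + V ω := by
    intro ω
    rw [hTdef, hUdef, hVdef]
    simp only
    rw [← Finset.sum_add_distrib]
    exact Finset.sum_congr rfl (fun i _ => hZAB i ω)
  have hUb : ∀ ω, |U ω| ≤ n * C := by
    intro ω
    calc |U ω| ≤ ∑ i ∈ Finset.range n, |A i ω| := Finset.abs_sum_le_sum_abs _ _
    _ ≤ ∑ _i ∈ Finset.range n, C := Finset.sum_le_sum (fun i _ => habsA i ω)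
    _ = n * C := by simp [mul_comm]
  have hU2 : ∫ ω, (U ω)^2 ∂P = n * α := sum_sq hmA hindepA hAL2 intA1 intA2 n
  have hU4 : ∫ ω, (U ω)^4 ∂P ≤ 3*n^2*α^2 + n*C^2*α := sum_four hmA hindepA hC0 habsA intA1 intA2 n
  have hV2 : ∫ ω, (V ω)^2 ∂P = n * β := sum_sq hmB hindepB hBL2 intB1 intB2 n
  have hT2 : ∫ ω, (T ω)^2 ∂P = n * v := sum_sq hm hindep hZL2 intZ1 intZ2 n
  have hVL2 : MemLp V 2 P := by
    have := memLp_finset_sum' (Finset.range n) (fun i (_ : i ∈ Finset.range n) => hBL2 i)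
    convert this using 1
    ext ω
    simp [hVdef]
  have hTL2 : MemLp T 2 P := by
    have := memLp_finset_sum' (Finset.range n) (fun i (_ : i ∈ Finset.range n) => hZL2 i)
    convert this using 1
    ext ω
    simp [hTdef]
  set ψ : Ω → ℝ := fun ω => max (-cst) (min cst (U ω)) with hψdef
  have hψm : Measurable ψ := measurable_const.max (measurable_const.min hUm)
  have hψb : ∀ ω, |ψ ω| ≤ cst := by
    intro ω
    rw [abs_le]
    constructor
    · exact le_max_left _ _
    · exact max_le (by linarith) (min_le_left _ _)
  -- lower bound on ∫ U ψ
  have iU2 : Integrable (fun ω => (U ω)^2) P :=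
    integrable_of_bdd (hUm.pow_const 2) (C := (n*C)^2) (fun ω => by
      rw [abs_of_nonneg (by positivity), ← sq_abs]
      exact pow_le_pow_left₀ (abs_nonneg _) (hUb ω) 2)
  have iU4 : Integrable (fun ω => (U ω)^4) P :=
    integrable_of_bdd (hUm.pow_const 4) (C := (n*C)^4) (fun ω => by
      rw [abs_of_nonneg (by positivity)]
      calc (U ω)^4 = |U ω|^4 := by rw [← abs_pow, abs_of_nonneg (by positivity)]
      _ ≤ ((n:ℝ)*C)^4 := pow_le_pow_left₀ (abs_nonneg _) (hUb ω) 4)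
  have iUψ : Integrable (fun ω => U ω * ψ ω) P :=
    integrable_of_bdd (hUm.mul hψm) (C := (n*C)*cst) (fun ω => by
      rw [abs_mul]
      exact mul_le_mul (hUb ω) (hψb ω) (abs_nonneg _) (by positivity))
  have eU : 3/8 * (n*v) ≤ ∫ ω, U ω * ψ ω ∂P := by
    have hpt : ∀ ω, (U ω)^2*cst^2 - (U ω)^4 ≤ (U ω * ψ ω) * cst^2 := fun ω => clamp_ineq hcst0
    have i1 : Integrable (fun ω => (U ω)^2*cst^2 - (U ω)^4) P := (iU2.mul_const _).sub iU4
    have i2 : Integrable (fun ω => (U ω * ψ ω) * cst^2) P := iUψ.mul_const _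
    have hmono := integral_mono i1 i2 hpt
    rw [integral_sub (iU2.mul_const _) iU4, integral_mul_const, integral_mul_const, hU2] at hmono
    -- hmono : n*α*cst^2 - ∫U⁴ ≤ (∫ Uψ) * cst^2
    have hcst2 : cst^2 = 16*(v*(n:ℝ)) := by
      have : cst^2 = 16*(w^2*s^2) := by rw [hcstdef]; ring
      rw [this, hw2, hs2]
    rw [hcst2] at hmono
    have hnpos : (0:ℝ) < n := by linarith
    have hvn : (0:ℝ) < v*(n:ℝ) := mul_pos hvpos hnpos
    have k1 : 3*(n:ℝ)^2*(α*α) ≤ 3*(n:ℝ)^2*(v*α) :=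
      mul_le_mul_of_nonneg_left (mul_le_mul_of_nonneg_right hα2 hα0) (by positivity)
    have k2 : (n:ℝ)*α*(C^2) ≤ (n:ℝ)*α*((n:ℝ)*v) :=
      mul_le_mul_of_nonneg_left hC2n (by positivity)
    have k3 : 12*(n:ℝ)^2*v*(v/2) ≤ 12*(n:ℝ)^2*v*α :=
      mul_le_mul_of_nonneg_left hα1 (by positivity)
    have final : (3/8*((n:ℝ)*v))*(16*(v*(n:ℝ))) ≤ (∫ ω, U ω * ψ ω ∂P)*(16*(v*(n:ℝ))) := by
      linarith [hU4, hmono, k1, k2, k3]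
    exact le_of_mul_le_mul_right final (by linarith)
  -- lower bound on ∫ V ψ
  set s' : ℝ := w*s/32 with hs'def
  have hs'0 : 0 < s' := by positivity
  have hcs' : cst = 128*s' := by rw [hcstdef, hs'def]; ring
  have iV : Integrable V P := hVL2.integrable one_le_two
  have iV2 : Integrable (fun ω => (V ω)^2) P := hVL2.integrable_sq
  have iVψ : Integrable (fun ω => V ω * ψ ω) P := by
    apply Integrable.mono' (iV.abs.const_mul cst) ((hVm.mul hψm).aestronglyMeasurable)
    apply Filter.Eventually.of_forall (fun ω => ?_)
    rw [Real.norm_eq_abs, Pi.mul_apply, abs_mul]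
    calc |V ω| * |ψ ω| ≤ |V ω| * cst := mul_le_mul_of_nonneg_left (hψb ω) (abs_nonneg _)
    _ = cst * |V ω| := mul_comm _ _
  have eV : -(1/8) * ((n:ℝ)*v) ≤ ∫ ω, V ω * ψ ω ∂P := by
    have hpt : ∀ ω, (-64 : ℝ) * ((V ω)^2 + s'^2) ≤ V ω * ψ ω := by
      intro ω
      have h1 : 2*s'*|V ω| ≤ (V ω)^2 + s'^2 := amgm_abs hs'0
      have h2 : -(|V ω| * (128*s')) ≤ V ω * ψ ω := by
        rw [← hcs']
        calc -(|V ω| * cst) ≤ -(|V ω| * |ψ ω|) := by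
              exact neg_le_neg (mul_le_mul_of_nonneg_left (hψb ω) (abs_nonneg _))
        _ = -|V ω * ψ ω| := by rw [abs_mul]
        _ ≤ V ω * ψ ω := neg_abs_le _
      linarith [h1, h2]
    have i3 : Integrable (fun ω => (-64 : ℝ) * ((V ω)^2 + s'^2)) P :=
      (iV2.add (integrable_const _)).const_mul _
    have hmono := integral_mono i3 iVψ hpt
    rw [integral_const_mul, integral_add iV2 (integrable_const _), hV2, integral_const] at hmono
    simp only [probReal_univ, measure_univ, ENNReal.toReal_one, smul_eq_mul, one_mul] at hmono
    have hs'2 : s'^2 = v*(n:ℝ)/1024 := by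
      have h : s'^2 = w^2*s^2/1024 := by rw [hs'def]; ring
      rw [h, hw2, hs2]
    have hnβ : (n:ℝ)*β ≤ (n:ℝ)*(v/1024) := mul_le_mul_of_nonneg_left hβ1 (by positivity)
    rw [hs'2] at hmono
    linarith
  -- combine: lower bound on ∫ T ψ
  have hTψeq : (fun ω => T ω * ψ ω) = fun ω => U ω * ψ ω + V ω * ψ ω := by
    funext ω
    rw [hTUV ω]
    ring
  have iTψ : Integrable (fun ω => T ω * ψ ω) P := by
    rw [hTψeq]
    exact iUψ.add iVψ
  have eT : 1/4*((n:ℝ)*v) ≤ ∫ ω, T ω * ψ ω ∂P := by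
    rw [hTψeq, integral_add iUψ iVψ]
    linarith
  -- upper bound
  set lam : ℝ := w/64 with hlamdef
  set E : Set Ω := {ω | lam * s ≤ |T ω|} with hEdef
  have hEmeas : MeasurableSet E := measurableSet_le measurable_const hTm.abs
  have iT2 : Integrable (fun ω => (T ω)^2) P := hTL2.integrable_sq
  have hws : w^2*s^2 = v*(n:ℝ) := by rw [hw2, hs2]
  have hpt : ∀ ω, T ω * ψ ω ≤ v*(n:ℝ)/16 + 1/32*(T ω)^2
      + E.indicator (fun _ => 128*(v*(n:ℝ))) ω := by
    intro ω
    have hTψ : T ω * ψ ω ≤ |T ω| * cst := by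
      calc T ω * ψ ω ≤ |T ω * ψ ω| := le_abs_self _
      _ = |T ω| * |ψ ω| := abs_mul _ _
      _ ≤ |T ω| * cst := mul_le_mul_of_nonneg_left (hψb ω) (abs_nonneg _)
    rw [hcstdef] at hTψ
    by_cases hω : ω ∈ E
    · rw [Set.indicator_of_mem hω]
      have h1 : 2*(64*w*s)*|T ω| ≤ (T ω)^2 + (64*w*s)^2 := amgm_abs (by positivity)
      linarith [h1, hTψ, hws, mul_pos hvpos (show (0:ℝ) < n by linarith)]
    · rw [Set.indicator_of_notMem hω]
      have h2 : |T ω| < lam * s := not_le.mp hω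
      have h3 : |T ω| * (4*w*s) ≤ (lam*s)*(4*w*s) :=
        mul_le_mul_of_nonneg_right h2.le (by positivity)
      have h4 : (lam*s)*(4*w*s) = v*(n:ℝ)/16 := by
        have he : (lam*s)*(4*w*s) = w^2*s^2/16 := by rw [hlamdef]; ring
        rw [he, hws]
      linarith [sq_nonneg (T ω), hTψ, h3, h4]
  have iInd : Integrable (E.indicator (fun _ => (128*(v*(n:ℝ))))) P :=
    (integrable_const _).indicator hEmeas
  have i5 : Integrable (fun ω => v*(n:ℝ)/16 + 1/32*(T ω)^2
      + E.indicator (fun _ => 128*(v*(n:ℝ))) ω) P :=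
    ((integrable_const _).add (iT2.const_mul _)).add iInd
  have iA1 : Integrable (fun ω => v*(n:ℝ)/16 + 1/32*(T ω)^2) P :=
    (integrable_const _).add (iT2.const_mul _)
  have imono := integral_mono iTψ i5 hpt
  rw [integral_add iA1 iInd,
    integral_add (integrable_const _) (iT2.const_mul _), integral_const,
    integral_const_mul, hT2, integral_indicator_const _ hEmeas] at imono
  simp only [probReal_univ, measure_univ, ENNReal.toReal_one, smul_eq_mul, one_mul, Measure.real] at imono
  have h6 : (5/32)*(v*(n:ℝ)) ≤ (P E).toReal * (128*(v*(n:ℝ))) := by linarith [eT, imono]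
  have hvn : (0:ℝ) < v*(n:ℝ) := mul_pos hvpos (by linarith)
  have h9 : (1/4096:ℝ)*(128*(v*(n:ℝ))) ≤ (P E).toReal * (128*(v*(n:ℝ))) := by linarith
  exact le_of_mul_le_mul_right h9 (by linarith)

end SLpAux

/-- If `X, X₁, X₂, …` are i.i.d. with `E[X²] < ∞`, mean `μ`, and `X` not a.s. equal to `μ`,
then for every `0 < p ≤ 2` the series `∑ₙ E[|Sₙ/n − μ|^p]` diverges. -/
theorem stmt0 {Ω : Type*} [MeasurableSpace Ω] (P : Measure Ω) [IsProbabilityMeasure P]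
    (X : ℕ → Ω → ℝ) (X0 : Ω → ℝ) (μ : ℝ)
    (hmeas : ∀ i, Measurable (X i)) (hmeas0 : Measurable X0)
    (hindep : iIndepFun X P)
    (hident : ∀ i, IdentDistrib (X i) X0 P P)
    (hL2 : Integrable (fun ω => (X0 ω) ^ 2) P)
    (hmean : ∫ ω, X0 ω ∂P = μ)
    (hnondeg : ¬ (∀ᵐ ω ∂P, X0 ω = μ))
    (p : ℝ) (hp0 : 0 < p) (hp2 : p ≤ 2) :
    ¬ Summable (fun n : ℕ =>
      ∫ ω, |(∑ i ∈ Finset.range (n + 1), X i ω) / (n + 1) - μ| ^ p ∂P) := by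
  intro hsum
  have hX0L2 : MemLp X0 2 P := (memLp_two_iff_integrable_sq hmeas0.aestronglyMeasurable).mpr hL2
  set Z : ℕ → Ω → ℝ := fun i ω => X i ω - μ with hZdef
  set Z0 : Ω → ℝ := fun ω => X0 ω - μ with hZ0def
  have hmZ : ∀ i, Measurable (Z i) := fun i => (hmeas i).sub_const μ
  have hmZ0 : Measurable Z0 := hmeas0.sub_const μ
  have hindepZ : iIndepFun Z P :=
    hindep.comp (fun _ => fun x => x - μ) (fun _ => measurable_id.sub_const μ)
  have hidZ : ∀ i, IdentDistrib (Z i) Z0 P P := fun i =>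
    (hident i).comp (measurable_id.sub_const μ)
  have hZ0L2 : MemLp Z0 2 P := hX0L2.sub (memLp_const μ)
  have hZ0mean : ∫ ω, Z0 ω ∂P = 0 := by
    have : ∫ ω, Z0 ω ∂P = (∫ ω, X0 ω ∂P) - ∫ _ω, μ ∂P :=
      integral_sub (hX0L2.integrable one_le_two) (integrable_const μ)
    rw [this, hmean, integral_const]
    simp
  set v : ℝ := ∫ ω, (Z0 ω)^2 ∂P with hvdef
  have hZsq_int : Integrable (fun ω => (Z0 ω)^2) P := hZ0L2.integrable_sq
  have hvpos : 0 < v := by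
    rcases lt_or_eq_of_le (integral_nonneg (fun ω => sq_nonneg (Z0 ω)) : 0 ≤ v) with h | h
    · exact h
    · exfalso
      apply hnondeg
      have h0 : ∫ ω, (Z0 ω)^2 ∂P = 0 := h.symm
      have hae := (integral_eq_zero_iff_of_nonneg (fun ω => sq_nonneg (Z0 ω)) hZsq_int).mp h0
      filter_upwards [hae] with ω hω
      have h1 : (X0 ω - μ)^2 = 0 := hω
      have h2 : X0 ω - μ = 0 := by
        exact (pow_eq_zero_iff two_ne_zero).mp h1
      linarith
  obtain ⟨N, hN1, hanti⟩ := anticonc hmZ hmZ0 hindepZ hidZ hZ0L2 hZ0mean rfl hvpos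
  set lam : ℝ := Real.sqrt v / 64 with hlamdef
  have hlam0 : 0 < lam := by
    rw [hlamdef]
    positivity
  set K : ℝ := lam ^ p * (1/4096) with hKdef
  have hK0 : 0 < K := by
    rw [hKdef]
    have := Real.rpow_pos_of_pos hlam0 p
    positivity
  have key : ∀ n : ℕ, N ≤ n + 1 →
      K * (1/((n:ℝ)+1)) ≤ ∫ ω, |(∑ i ∈ Finset.range (n + 1), X i ω) / (n + 1) - μ| ^ p ∂P := by
    intro n hn
    have hmR : (((n+1:ℕ)):ℝ) = (n:ℝ)+1 := by push_cast; ring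
    have hR1 : (1:ℝ) ≤ (n:ℝ)+1 := by
      have := Nat.cast_nonneg (α := ℝ) n
      linarith
    have hR0 : (0:ℝ) < (n:ℝ)+1 := by linarith
    set T : Ω → ℝ := fun ω => ∑ i ∈ Finset.range (n+1), Z i ω with hTdef
    have hTm : Measurable T := Finset.measurable_sum _ (fun i _ => hmZ i)
    have hTrel : ∀ ω, (∑ i ∈ Finset.range (n+1), X i ω)/((n:ℝ)+1) - μ = T ω / ((n:ℝ)+1) := by
      intro ω
      have hT : T ω = (∑ i ∈ Finset.range (n+1), X i ω) - ((n:ℝ)+1)*μ := by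
        show (∑ i ∈ Finset.range (n+1), (X i ω - μ)) = _
        rw [Finset.sum_sub_distrib, Finset.sum_const, Finset.card_range, nsmul_eq_mul]
        push_cast
        ring
      rw [hT]
      field_simp
    set sm : ℝ := Real.sqrt (((n+1:ℕ)):ℝ) with hsmdef
    have hsm0 : 0 < sm := Real.sqrt_pos.mpr (by rw [hmR]; linarith)
    have hsm : sm * sm = (n:ℝ)+1 := by
      rw [hsmdef, Real.mul_self_sqrt (by positivity)]
      exact hmR
    set E : Set Ω := {ω | lam * sm ≤ |T ω|} with hEdef
    have hEmeas : MeasurableSet E := measurableSet_le measurable_const hTm.abs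
    have hPr : 1/4096 ≤ (P E).toReal := hanti (n+1) hn
    have hTL2 : MemLp T 2 P := by
      have := memLp_finset_sum' (Finset.range (n+1))
        (fun i (_ : i ∈ Finset.range (n+1)) => (hidZ i).symm.memLp_snd (p := 2) hZ0L2)
      convert this using 1
      ext ω
      simp [hTdef]
    have hgL2 : MemLp (fun ω => (∑ i ∈ Finset.range (n+1), X i ω)/((n:ℝ)+1) - μ) 2 P := by
      have heq : (fun ω => (∑ i ∈ Finset.range (n+1), X i ω)/((n:ℝ)+1) - μ)
          = fun ω => ((n:ℝ)+1)⁻¹ * T ω := by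
        funext ω
        rw [hTrel ω]
        ring
      rw [heq]
      exact hTL2.const_mul _
    have hgLp : MemLp (fun ω => (∑ i ∈ Finset.range (n+1), X i ω)/((n:ℝ)+1) - μ)
        (ENNReal.ofReal p) P := by
      apply hgL2.mono_exponent
      calc ENNReal.ofReal p ≤ ENNReal.ofReal 2 := ENNReal.ofReal_le_ofReal hp2
      _ = 2 := by norm_num [ENNReal.ofReal_ofNat]
    have hInt : Integrable (fun ω =>
        |(∑ i ∈ Finset.range (n+1), X i ω) / ((n:ℝ)+1) - μ| ^ p) P := by
      have h1 := hgLp.integrable_norm_rpow (ENNReal.ofReal_pos.mpr hp0).ne' ENNReal.ofReal_ne_top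
      simp only [ENNReal.toReal_ofReal hp0.le, Real.norm_eq_abs] at h1
      exact h1
    set q : ℝ := (lam/sm)^p with hqdef
    have hq0 : 0 ≤ q := Real.rpow_nonneg (by positivity) p
    have hpt : ∀ ω, E.indicator (fun _ => q) ω
        ≤ |(∑ i ∈ Finset.range (n+1), X i ω)/((n:ℝ)+1) - μ| ^ p := by
      intro ω
      by_cases hω : ω ∈ E
      · rw [Set.indicator_of_mem hω]
        have h1 : lam * sm ≤ |T ω| := hω
        have h2 : lam / sm ≤ |T ω| / ((n:ℝ)+1) := by
          rw [div_le_div_iff₀ hsm0 hR0]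
          calc lam * ((n:ℝ)+1) = (lam * sm) * sm := by rw [mul_assoc, hsm]
          _ ≤ |T ω| * sm := mul_le_mul_of_nonneg_right h1 hsm0.le
        have h3 : |(∑ i ∈ Finset.range (n+1), X i ω)/((n:ℝ)+1) - μ| = |T ω| / ((n:ℝ)+1) := by
          rw [hTrel ω, abs_div, abs_of_pos hR0]
        rw [h3, hqdef]
        exact Real.rpow_le_rpow (by positivity) h2 hp0.le
      · rw [Set.indicator_of_notMem hω]
        exact Real.rpow_nonneg (abs_nonneg _) p
    have hiInd : Integrable (E.indicator (fun _ => q)) P := (integrable_const _).indicator hEmeas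
    have hmono := integral_mono hiInd hInt hpt
    rw [integral_indicator_const _ hEmeas, smul_eq_mul] at hmono
    have hsp : sm^p ≤ (n:ℝ)+1 := by
      rw [hsmdef, Real.sqrt_eq_rpow, ← Real.rpow_mul (by positivity : (0:ℝ) ≤ ((n+1:ℕ):ℝ))]
      calc (((n+1:ℕ)):ℝ) ^ ((1/2)*p) ≤ (((n+1:ℕ)):ℝ)^(1:ℝ) :=
            Real.rpow_le_rpow_of_exponent_le (by rw [hmR]; linarith) (by linarith)
      _ = (n:ℝ)+1 := by rw [Real.rpow_one, hmR]
    have hq : lam^p / ((n:ℝ)+1) ≤ q := by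
      rw [hqdef, Real.div_rpow hlam0.le hsm0.le]
      rw [div_le_div_iff₀ hR0 (Real.rpow_pos_of_pos hsm0 p)]
      exact mul_le_mul_of_nonneg_left hsp (Real.rpow_nonneg hlam0.le p)
    calc K * (1/((n:ℝ)+1)) = (lam^p/((n:ℝ)+1)) * (1/4096) := by rw [hKdef]; ring
    _ ≤ q * ((P E).toReal) := mul_le_mul hq hPr (by norm_num) hq0
    _ = (P E).toReal * q := mul_comm _ _
    _ ≤ _ := hmono
  have h1 := (summable_nat_add_iff (f := fun n : ℕ =>
    ∫ ω, |(∑ i ∈ Finset.range (n + 1), X i ω) / (n + 1) - μ| ^ p ∂P) N).mpr hsum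
  have h2 : Summable (fun k : ℕ => K * (1/((((k + N):ℕ):ℝ)+1))) :=
    Summable.of_nonneg_of_le (fun k => by positivity) (fun k => key (k + N) (by omega)) h1
  have h3 := h2.mul_left (1/K)
  have h4 : (fun k : ℕ => (1/K) * (K * (1/((((k + N):ℕ):ℝ)+1))))
      = fun k : ℕ => 1/((((k + N):ℕ):ℝ) + 1) := by
    funext k
    field_simp
  rw [h4] at h3
  have h5 : Summable (fun k : ℕ => 1/((k:ℝ) + 1)) :=
    (summable_nat_add_iff (f := fun k : ℕ => 1/((k:ℝ)+1)) N).mp h3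
  have h5' : Summable (fun k : ℕ => 1/(((k+1:ℕ)):ℝ)) :=
    h5.congr (fun k => by norm_cast)
  exact Real.not_summable_one_div_natCast
    ((summable_nat_add_iff (f := fun k : ℕ => 1/(k:ℝ)) 1).mp h5')
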